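/- Let M be an n×n quaternionic matrix and λ ∈ ℂ. Then λ is an eigenvalue of the complex 2n×2n matrix ψ(M) (i.e. det(λ·I_{2n} − ψ(M)) = 0) if and only if the complex conjugate of λ is an eigenvalue of ψ(M). In particular the 2n complex eigenvalues of ψ(M) counted with multiplicity appear in complex conjugate pairs. -/

import Mathlib

noncomputable section

/-- Simplex part of a quaternion: `q = Sc q + j * Pc q`. -/
def Sc (q : Quaternion ℝ) : ℂ := ⟨q.re, q.imI⟩

/-- Perplex part of a quaternion: `q = Sc q + j * Pc q`. -/
def Pc (q : Quaternion ℝ) : ℂ := ⟨q.imJ, -q.imK⟩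

/-- The map ψ sending a quaternionic matrix `M = M^S + j·M^P` (symplectic decomposition)
to the complex block matrix `[[M^S, -conj(M^P)], [M^P, conj(M^S)]]`. -/
def psi {I J : Type*} (M : Matrix I J (Quaternion ℝ)) :
    Matrix (I ⊕ I) (J ⊕ J) ℂ :=
  Matrix.fromBlocks (M.map Sc) (-((M.map Pc).map (starRingEnd ℂ)))
    (M.map Pc) ((M.map Sc).map (starRingEnd ℂ))

open Matrix Polynomial

def Jmat (n : ℕ) : Matrix (Fin n ⊕ Fin n) (Fin n ⊕ Fin n) ℂ :=
  Matrix.fromBlocks 0 (-1) 1 0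

lemma Jmat_mul_neg (n : ℕ) : Jmat n * (- Jmat n) = 1 := by
  simp [Jmat, Matrix.fromBlocks_multiply, Matrix.fromBlocks_neg, ← Matrix.fromBlocks_one]

lemma map_conj_conj {I J : Type*} (A : Matrix I J ℂ) :
    (A.map (starRingEnd ℂ)).map (starRingEnd ℂ) = A := by
  ext i j; simp

lemma Jmat_conj (n : ℕ) (M : Matrix (Fin n) (Fin n) (Quaternion ℝ)) :
    Jmat n * psi M = (psi M).map (starRingEnd ℂ) * Jmat n := by
  ext (i | i) (j | j) <;>
    simp [Jmat, psi, Matrix.fromBlocks_multiply, Matrix.fromBlocks_map, Matrix.map_map,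
      Matrix.map_apply, Function.comp]

lemma isUnit_det_Jmat (n : ℕ) : IsUnit (Jmat n).det := by
  have := congrArg Matrix.det (Jmat_mul_neg n)
  rw [Matrix.det_mul, Matrix.det_one] at this
  exact IsUnit.of_mul_eq_one _ this

lemma charpoly_psi_conj (n : ℕ) (M : Matrix (Fin n) (Fin n) (Quaternion ℝ)) :
    ((psi M).map (starRingEnd ℂ)).charpoly = (psi M).charpoly := by
  have hJ : IsUnit ((Jmat n).map (C : ℂ →+* ℂ[X])).det := by
    have := congrArg (fun A => (A.map (C : ℂ →+* ℂ[X])).det) (Jmat_mul_neg n)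
    simp only [Matrix.map_mul, Matrix.map_one C C.map_zero C.map_one, Matrix.det_mul,
      Matrix.det_one] at this
    exact IsUnit.of_mul_eq_one _ this
  have key : charmatrix ((psi M).map (starRingEnd ℂ)) * (Jmat n).map C
      = (Jmat n).map C * charmatrix (psi M) := by
    show (Matrix.scalar _ X - (C : ℂ →+* ℂ[X]).mapMatrix _) * (C : ℂ →+* ℂ[X]).mapMatrix (Jmat n)
        = (C : ℂ →+* ℂ[X]).mapMatrix (Jmat n) * (Matrix.scalar _ X - (C : ℂ →+* ℂ[X]).mapMatrix _)
    rw [sub_mul, mul_sub, ← _root_.map_mul, ← _root_.map_mul, ← Jmat_conj]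
    congr 1
    exact Matrix.scalar_commute X (fun r => Commute.all _ _) _
  have := congrArg Matrix.det key
  rw [Matrix.det_mul, Matrix.det_mul] at this
  unfold Matrix.charpoly
  exact (mul_left_cancel₀ hJ.ne_zero (by rw [← this, mul_comm])).symm

lemma charpoly_map_conj (n : ℕ) (M : Matrix (Fin n) (Fin n) (Quaternion ℝ)) :
    ((psi M).charpoly).map (starRingEnd ℂ) = (psi M).charpoly := by
  rw [← Matrix.charpoly_map, charpoly_psi_conj]

/-- for an n×n quaternionic matrix M, a complex number λ is an eigenvalue of
ψ(M) iff its complex conjugate is; in particular the 2n complex eigenvalues of ψ(M)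
(counted with multiplicity, i.e. the roots of its characteristic polynomial) come in
complex conjugate pairs. -/
theorem psi_eigenvalues_conj_pairs (n : ℕ) (M : Matrix (Fin n) (Fin n) (Quaternion ℝ)) :
    (∀ lam : ℂ,
      (lam • (1 : Matrix (Fin n ⊕ Fin n) (Fin n ⊕ Fin n) ℂ) - psi M).det = 0 ↔
      ((starRingEnd ℂ) lam • (1 : Matrix (Fin n ⊕ Fin n) (Fin n ⊕ Fin n) ℂ) - psi M).det = 0) ∧
    Multiset.card (Matrix.charpoly (psi M)).roots = 2 * n ∧
    ((Matrix.charpoly (psi M)).roots.map (starRingEnd ℂ) = (Matrix.charpoly (psi M)).roots) := by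
  have hconj : ∀ lam : ℂ,
      ((starRingEnd ℂ) lam • (1 : Matrix (Fin n ⊕ Fin n) (Fin n ⊕ Fin n) ℂ) - psi M).det
      = (starRingEnd ℂ) ((lam • (1 : Matrix (Fin n ⊕ Fin n) (Fin n ⊕ Fin n) ℂ)
          - (psi M).map (starRingEnd ℂ)).det) := by
    intro lam
    rw [RingHom.map_det]
    congr 1
    ext i j
    simp [RingHom.mapMatrix_apply, Matrix.one_apply, apply_ite]
  have hdet_eq : ∀ lam : ℂ,
      (lam • (1 : Matrix (Fin n ⊕ Fin n) (Fin n ⊕ Fin n) ℂ) - (psi M).map (starRingEnd ℂ)).det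
      = (lam • (1 : Matrix (Fin n ⊕ Fin n) (Fin n ⊕ Fin n) ℂ) - psi M).det := by
    intro lam
    have key : (lam • (1 : Matrix (Fin n ⊕ Fin n) (Fin n ⊕ Fin n) ℂ)
        - (psi M).map (starRingEnd ℂ)) * Jmat n
        = Jmat n * (lam • (1 : Matrix (Fin n ⊕ Fin n) (Fin n ⊕ Fin n) ℂ) - psi M) := by
      rw [sub_mul, mul_sub, ← Jmat_conj]
      congr 1
      rw [smul_mul_assoc, mul_smul_comm, one_mul, mul_one]
    have := congrArg Matrix.det key
    rw [Matrix.det_mul, Matrix.det_mul] at this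
    exact mul_left_cancel₀ (isUnit_det_Jmat n).ne_zero (by rw [← this, mul_comm])
  refine ⟨fun lam => ?_, ?_, ?_⟩
  · rw [hconj lam, hdet_eq lam]
    exact (_root_.map_eq_zero (starRingEnd ℂ)).symm
  · rw [(Polynomial.splits_iff_card_roots).mp (IsAlgClosed.splits _),
      Matrix.charpoly_natDegree_eq_dim]
    simp [two_mul]
  · conv_rhs => rw [← charpoly_map_conj n M]
    rw [(IsAlgClosed.splits _).roots_map_of_injective (starRingEnd ℂ).injective]
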